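/- Let G be a group with elements h₁,…,h₅ and integers t_{ijk} (1 ≤ i < j < k ≤ 5) satisfying the listed commutator relations, and suppose the normal-form map ℤ⁵ → G is injective. Then, evaluating the associativity identity (h₄h₂)h₁ = h₄(h₂h₁) via the relations, both sides equal h₁h₂h₃^{t₁₂₃}h₄^{t₁₂₄+1}h₅^{e} for some exponent e, where the left side gives e = t₁₂₅+t₁₄₅+t₂₄₅ and the right side gives e = t₁₂₅+t₁₄₅+t₂₄₅+t₁₂₃t₃₄₅; consequently t₁₂₃·t₃₄₅ = 0. -/

import Mathlib

private lemma swap_pow {G : Type*} [Group G] (x y z : G)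
    (hzx : Commute z x) (hzy : Commute z y) (h : x * y = y * x * z) :
    ∀ n : ℤ, x * y ^ n = y ^ n * x * z ^ n := by
  have hxy : y⁻¹ * x * y = x * z := by
    calc y⁻¹ * x * y = y⁻¹ * (x * y) := by group
      _ = y⁻¹ * (y * x * z) := by rw [h]
      _ = x * z := by group
  have key : ∀ n : ℤ, y ^ (-n) * x * y ^ n = x * z ^ n := by
    intro n
    induction n using Int.induction_on with
    | zero => simp
    | succ k ih =>
        have e1 : y ^ (-(k+1):ℤ) * x * y ^ ((k:ℤ)+1) =
            y⁻¹ * (y ^ (-(k:ℤ)) * x * y ^ (k:ℤ)) * y := by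
          rw [zpow_add, zpow_one, neg_add, zpow_add, zpow_neg_one]; group
        rw [e1, ih]
        have e2 : z ^ (k:ℤ) * y = y * z ^ (k:ℤ) := (hzy.zpow_left (k:ℤ)).eq
        calc y⁻¹ * (x * z ^ (k:ℤ)) * y = y⁻¹ * x * (z ^ (k:ℤ) * y) := by group
          _ = (y⁻¹ * x * y) * z ^ (k:ℤ) := by rw [e2]; group
          _ = x * z ^ ((k:ℤ)+1) := by
              rw [hxy, mul_assoc, ← zpow_one_add, show (1+(k:ℤ)) = (k:ℤ)+1 by ring]
    | pred k ih =>
        have e1 : y ^ (-(-(k:ℤ)-1)) * x * y ^ (-(k:ℤ)-1) =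
            y * (y ^ (-(-(k:ℤ))) * x * y ^ (-(k:ℤ))) * y⁻¹ := by
          rw [show (-(-(k:ℤ)-1)) = (k:ℤ)+1 by ring, zpow_add, zpow_one, neg_neg,
            show (-(k:ℤ)-1) = -(k:ℤ) + (-1) by ring, zpow_add, zpow_neg_one]
          group
        rw [e1, ih]
        have hx : x = y * x * y⁻¹ * z := by
          calc x = y * (y⁻¹ * x * y) * y⁻¹ := by group
            _ = y * (x * z) * y⁻¹ := by rw [hxy]
            _ = y * x * (z * y⁻¹) := by group
            _ = y * x * (y⁻¹ * z) := by rw [hzy.inv_right.eq]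
            _ = y * x * y⁻¹ * z := by group
        have hxy' : y * x * y⁻¹ = x * z⁻¹ :=
          mul_right_cancel (b := z) (by rw [← hx]; group)
        have e2 : z ^ (-(k:ℤ)) * y⁻¹ = y⁻¹ * z ^ (-(k:ℤ)) :=
          ((hzy.zpow_left (-(k:ℤ))).inv_right).eq
        calc y * (x * z ^ (-(k:ℤ))) * y⁻¹ = y * x * (z ^ (-(k:ℤ)) * y⁻¹) := by group
          _ = (y * x * y⁻¹) * z ^ (-(k:ℤ)) := by rw [e2]; group
          _ = x * z ^ (-(k:ℤ)-1) := by
              rw [hxy', show (-(k:ℤ)-1) = -1 + (-(k:ℤ)) by ring, zpow_add,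
                zpow_neg_one]
              group
  intro n
  have h' := key n
  calc x * y ^ n = y ^ n * (y ^ (-n) * x * y ^ n) := by group
    _ = y ^ n * x * z ^ n := by rw [h']; group

theorem assoc_h4_h2_h1_gives_first_consistency (G : Type*) [Group G] (h1 h2 h3 h4 h5 : G)
    (t123 t124 t125 t134 t135 t145 t234 t235 t245 t345 : ℤ)
    (c21 : h2⁻¹ * h1⁻¹ * h2 * h1 = h3 ^ t123 * h4 ^ t124 * h5 ^ t125)
    (c31 : h3⁻¹ * h1⁻¹ * h3 * h1 = h4 ^ t134 * h5 ^ t135)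
    (c32 : h3⁻¹ * h2⁻¹ * h3 * h2 = h4 ^ t234 * h5 ^ t235)
    (c41 : h4⁻¹ * h1⁻¹ * h4 * h1 = h5 ^ t145)
    (c42 : h4⁻¹ * h2⁻¹ * h4 * h2 = h5 ^ t245)
    (c43 : h4⁻¹ * h3⁻¹ * h4 * h3 = h5 ^ t345)
    (c51 : h5⁻¹ * h1⁻¹ * h5 * h1 = 1)
    (c52 : h5⁻¹ * h2⁻¹ * h5 * h2 = 1)
    (c53 : h5⁻¹ * h3⁻¹ * h5 * h3 = 1)
    (c54 : h5⁻¹ * h4⁻¹ * h5 * h4 = 1)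
    (hinj : Function.Injective
      (fun a : Fin 5 → ℤ => h1 ^ a 0 * h2 ^ a 1 * h3 ^ a 2 * h4 ^ a 3 * h5 ^ a 4)) :
    (h4 * h2) * h1
        = h1 * h2 * h3 ^ t123 * h4 ^ (t124 + 1) * h5 ^ (t125 + t145 + t245) ∧
    h4 * (h2 * h1)
        = h1 * h2 * h3 ^ t123 * h4 ^ (t124 + 1)
            * h5 ^ (t125 + t145 + t245 + t123 * t345) ∧
    t123 * t345 = 0 := by
  -- h5 is central among the generators
  have k51 : Commute h5 h1 := by
    rw [Commute, SemiconjBy, ← mul_one (h1 * h5), ← c51]; group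
  have k52 : Commute h5 h2 := by
    rw [Commute, SemiconjBy, ← mul_one (h2 * h5), ← c52]; group
  have k53 : Commute h5 h3 := by
    rw [Commute, SemiconjBy, ← mul_one (h3 * h5), ← c53]; group
  have k54 : Commute h5 h4 := by
    rw [Commute, SemiconjBy, ← mul_one (h4 * h5), ← c54]; group
  -- push h5-powers to the right (assoc-form simp lemmas)
  have w1 : ∀ (n : ℤ) (w : G), h5 ^ n * (h1 * w) = h1 * (h5 ^ n * w) := fun n w => by
    rw [← mul_assoc, (k51.zpow_left n).eq, mul_assoc]
  have w2 : ∀ (n : ℤ) (w : G), h5 ^ n * (h2 * w) = h2 * (h5 ^ n * w) := fun n w => by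
    rw [← mul_assoc, (k52.zpow_left n).eq, mul_assoc]
  have w3 : ∀ (n m : ℤ) (w : G), h5 ^ n * (h3 ^ m * w) = h3 ^ m * (h5 ^ n * w) :=
    fun n m w => by rw [← mul_assoc, ((k53.zpow_left n).zpow_right m).eq, mul_assoc]
  have w4 : ∀ (n m : ℤ) (w : G), h5 ^ n * (h4 ^ m * w) = h4 ^ m * (h5 ^ n * w) :=
    fun n m w => by rw [← mul_assoc, ((k54.zpow_left n).zpow_right m).eq, mul_assoc]
  have w4' : ∀ (n : ℤ) (w : G), h5 ^ n * (h4 * w) = h4 * (h5 ^ n * w) := fun n w => by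
    rw [← mul_assoc, (k54.zpow_left n).eq, mul_assoc]
  have e1 : ∀ n : ℤ, h5 ^ n * h1 = h1 * h5 ^ n := fun n => (k51.zpow_left n).eq
  have e2 : ∀ n : ℤ, h5 ^ n * h2 = h2 * h5 ^ n := fun n => (k52.zpow_left n).eq
  have e3 : ∀ n m : ℤ, h5 ^ n * h3 ^ m = h3 ^ m * h5 ^ n :=
    fun n m => ((k53.zpow_left n).zpow_right m).eq
  have e4 : ∀ n m : ℤ, h5 ^ n * h4 ^ m = h4 ^ m * h5 ^ n :=
    fun n m => ((k54.zpow_left n).zpow_right m).eq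
  have e4' : ∀ n : ℤ, h5 ^ n * h4 = h4 * h5 ^ n := fun n => (k54.zpow_left n).eq
  have comb5 : ∀ (a b : ℤ) (w : G), h5 ^ a * (h5 ^ b * w) = h5 ^ (a + b) * w :=
    fun a b w => by rw [← mul_assoc, ← zpow_add]
  have comb5' : ∀ a b : ℤ, h5 ^ a * h5 ^ b = h5 ^ (a + b) := fun a b => (zpow_add h5 a b).symm
  have comb4 : ∀ (a : ℤ) (w : G), h4 ^ a * (h4 * w) = h4 ^ (a + 1) * w := fun a w => by
    rw [← mul_assoc, ← zpow_add_one]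
  have comb4' : ∀ a : ℤ, h4 ^ a * h4 = h4 ^ (a + 1) := fun a => (zpow_add_one h4 a).symm
  have comb4l : ∀ (a : ℤ) (w : G), h4 * (h4 ^ a * w) = h4 ^ (1 + a) * w := fun a w => by
    rw [← mul_assoc, ← zpow_one_add]
  have comb4l' : ∀ a : ℤ, h4 * h4 ^ a = h4 ^ (1 + a) := fun a => (zpow_one_add h4 a).symm
  -- swap relations
  have s21 : h2 * h1 = h1 * h2 * (h3 ^ t123 * h4 ^ t124 * h5 ^ t125) := by
    rw [← c21]; group
  have s41 : h4 * h1 = h1 * h4 * h5 ^ t145 := by rw [← c41]; group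
  have s42 : h4 * h2 = h2 * h4 * h5 ^ t245 := by rw [← c42]; group
  have s43 : h4 * h3 = h3 * h4 * h5 ^ t345 := by rw [← c43]; group
  have s43n : ∀ n : ℤ, h4 * h3 ^ n = h3 ^ n * h4 * (h5 ^ t345) ^ n :=
    swap_pow h4 h3 (h5 ^ t345) ((k54.symm.zpow_right t345).symm)
      ((k53.symm.zpow_right t345).symm) s43
  have s43n' : ∀ n : ℤ, h4 * h3 ^ n = h3 ^ n * h4 * h5 ^ (t345 * n) := fun n => by
    rw [s43n n, ← zpow_mul]
  have part1 : (h4 * h2) * h1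
      = h1 * h2 * h3 ^ t123 * h4 ^ (t124 + 1) * h5 ^ (t125 + t145 + t245) := by
    calc (h4 * h2) * h1 = h2 * h4 * h5 ^ t245 * h1 := by rw [s42]
      _ = h2 * (h4 * h1) * h5 ^ t245 := by
          simp only [mul_assoc, e1, w1]
      _ = h2 * h1 * h4 * h5 ^ t145 * h5 ^ t245 := by rw [s41]; group
      _ = h1 * h2 * (h3 ^ t123 * h4 ^ t124 * h5 ^ t125) * h4 * h5 ^ t145 * h5 ^ t245 := by
          rw [s21]
      _ = h1 * h2 * h3 ^ t123 * h4 ^ (t124 + 1) * h5 ^ (t125 + t145 + t245) := by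
          simp only [mul_assoc, e4', w4', comb4, comb4', comb5, comb5',
            add_comm, add_left_comm]
  have part2 : h4 * (h2 * h1)
      = h1 * h2 * h3 ^ t123 * h4 ^ (t124 + 1)
          * h5 ^ (t125 + t145 + t245 + t123 * t345) := by
    calc h4 * (h2 * h1)
        = h4 * (h1 * h2 * (h3 ^ t123 * h4 ^ t124 * h5 ^ t125)) := by rw [s21]
      _ = (h4 * h1) * (h2 * (h3 ^ t123 * (h4 ^ t124 * h5 ^ t125))) := by group
      _ = h1 * ((h4 * h2) * (h3 ^ t123 * (h4 ^ t124 * (h5 ^ t145 * h5 ^ t125)))) := by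
          rw [s41]
          simp only [mul_assoc, w2, w3, w4, e4, e3, e2, e1]
      _ = h1 * (h2 * ((h4 * h3 ^ t123) * (h4 ^ t124
            * (h5 ^ t245 * (h5 ^ t145 * h5 ^ t125))))) := by
          rw [s42]
          simp only [mul_assoc, w2, w3, w4, e4, e3, e2, e1]
      _ = h1 * (h2 * (h3 ^ t123 * ((h4 * h4 ^ t124)
            * (h5 ^ (t345 * t123) * (h5 ^ t245 * (h5 ^ t145 * h5 ^ t125)))))) := by
          rw [s43n' t123]
          simp only [mul_assoc, w2, w3, w4, e4, e3, e2, e1]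
      _ = h1 * h2 * h3 ^ t123 * h4 ^ (t124 + 1)
            * h5 ^ (t125 + t145 + t245 + t123 * t345) := by
          simp only [mul_assoc, comb4l, comb4l', comb5, comb5']
          rw [show (1 + t124 : ℤ) = t124 + 1 by ring,
            show t345 * t123 + (t245 + (t145 + t125))
              = t125 + t145 + t245 + t123 * t345 by ring]
  refine ⟨part1, part2, ?_⟩
  have h12 : h1 * h2 * h3 ^ t123 * h4 ^ (t124 + 1) * h5 ^ (t125 + t145 + t245)
      = h1 * h2 * h3 ^ t123 * h4 ^ (t124 + 1)
          * h5 ^ (t125 + t145 + t245 + t123 * t345) := by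
    rw [← part1, ← part2]; group
  have hfun := hinj (a₁ := ![1, 1, t123, t124 + 1, t125 + t145 + t245])
      (a₂ := ![1, 1, t123, t124 + 1, t125 + t145 + t245 + t123 * t345])
      (by simpa using h12)
  have h5eq := congrFun hfun 4
  simp at h5eq
  rcases h5eq with h | h <;> simp [h]
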